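/- Fix integers n ≥ 1 and j ≥ 1, a real number α ≠ 0, and a real number θ. Then the sum over all j-even set partitions π of {1,…,nj} of the weight j^{#π} · (θ/α)^{↑#π} · ∏_{b ∈ π} [ −(−α/j)^{↑(#b/j)} ] · (#b − 1)! / (#b/j − 1)! equals j · [(nj−1)!/(n−1)!] · (θ/j)^{↑n}. (This is the statement that the Chinese-restaurant construction for even partitions yields the probability distribution p_n^j(π;α,θ) = j^{#π−1} [Γ(n)/Γ(nj)] (θ/α)^{↑#π} ∏_{b∈π} [−(−α/j)^{↑(#b/j)}] Γ(#b)/Γ(#b/j) / (θ/j)^{↑n} on j-even partitions of [nj].) -/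

import Mathlib

/-- The rising factorial `x^{↑n} = x(x+1)⋯(x+n−1)`. -/
def risingFactorial (x : ℝ) (n : ℕ) : ℝ := ∏ i ∈ Finset.range n, (x + i)

/-- A set partition is even of order `j` (`j`-even) if every block size is divisible
by `j`. -/
def IsEven {N : ℕ} (j : ℕ) (π : Finpartition (Finset.univ : Finset (Fin N))) : Prop :=
  ∀ b ∈ π.parts, j ∣ b.card

instance {N j : ℕ} (π : Finpartition (Finset.univ : Finset (Fin N))) :
    Decidable (IsEven j π) := by unfold IsEven; infer_instance

section Auxiliary

open Finset

variable {α : Type*} [DecidableEq α]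



@[simp] lemma rf_zero (x : ℝ) : risingFactorial x 0 = 1 := by simp [risingFactorial]

lemma rf_succ_left (x : ℝ) (n : ℕ) :
    risingFactorial x (n + 1) = x * risingFactorial (x + 1) n := by
  unfold risingFactorial
  rw [Finset.prod_range_succ']
  simp only [Nat.cast_zero, add_zero, Nat.cast_add, Nat.cast_one]
  rw [mul_comm]
  congr 1
  exact Finset.prod_congr rfl fun i _ => by ring

lemma rf_succ_right (x : ℝ) (n : ℕ) :
    risingFactorial x (n + 1) = risingFactorial x n * (x + n) := by
  unfold risingFactorial; rw [Finset.prod_range_succ]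

lemma rf_vandermonde (K : ℕ) (u v : ℝ) :
    ∑ k ∈ Finset.range (K + 1),
      (K.choose k : ℝ) * risingFactorial u k * risingFactorial v (K - k) =
    risingFactorial (u + v) K := by
  induction K with
  | zero => simp
  | succ K ih =>
    have split : ∑ k ∈ Finset.range (K + 2),
        ((K+1).choose k : ℝ) * risingFactorial u k * risingFactorial v (K + 1 - k) =
        (∑ k ∈ Finset.range (K + 1),
          (K.choose k : ℝ) * risingFactorial u k * risingFactorial v (K + 1 - k)) +
        ∑ i ∈ Finset.range (K + 1),
          (K.choose i : ℝ) * risingFactorial u (i + 1) * risingFactorial v (K - i) := by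
      rw [Finset.sum_range_succ' (fun k => ((K+1).choose k : ℝ) * risingFactorial u k *
            risingFactorial v (K + 1 - k)) (K+1)]
      rw [Finset.sum_range_succ' (fun k => ((K).choose k : ℝ) * risingFactorial u k *
            risingFactorial v (K + 1 - k)) K]
      have hch : ∀ i : ℕ, ((K+1).choose (i+1) : ℝ) = (K.choose (i+1) : ℝ) + (K.choose i : ℝ) := by
        intro i; rw [Nat.choose_succ_succ]; push_cast; ring
      simp only [hch, add_mul, Nat.add_sub_add_right]
      rw [Finset.sum_add_distrib]
      rw [Finset.sum_range_succ (fun x => ((K).choose (x+1) : ℝ) * risingFactorial u (x+1) *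
            risingFactorial v (K - x))]
      simp only [Nat.choose_succ_self, Nat.cast_zero, zero_mul, add_zero,
        Nat.choose_zero_right, Nat.cast_one, one_mul, rf_zero, Nat.sub_zero]
      ring
    rw [split]
    have h1 : ∑ k ∈ Finset.range (K + 1),
        (K.choose k : ℝ) * risingFactorial u k * risingFactorial v (K + 1 - k) +
        ∑ i ∈ Finset.range (K + 1),
          (K.choose i : ℝ) * risingFactorial u (i + 1) * risingFactorial v (K - i) =
        ∑ k ∈ Finset.range (K + 1),
          (K.choose k : ℝ) * risingFactorial u k * risingFactorial v (K - k) * (u + v + K) := by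
      rw [← Finset.sum_add_distrib]
      apply Finset.sum_congr rfl
      intro k hk
      have hk' : k ≤ K := Nat.lt_succ_iff.mp (Finset.mem_range.mp hk)
      have e1 : K + 1 - k = (K - k) + 1 := by omega
      have e2 : ((K - k : ℕ) : ℝ) = (K : ℝ) - (k : ℝ) := by
        push_cast [Nat.cast_sub hk']; ring
      rw [e1, rf_succ_right, rf_succ_right, e2]
      ring
    rw [h1, ← Finset.sum_mul, ih, ← rf_succ_right]

lemma rf_zero' (x : ℝ) : risingFactorial x 0 = 1 := rf_zero x


lemma avoid_parts_of_mem {s : Finset α} (π : Finpartition s) {t : Finset α}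
    (ht : t ∈ π.parts) : (π.avoid t).parts = π.parts.erase t := by
  ext c
  rw [Finpartition.mem_avoid, Finset.mem_erase]
  constructor
  · rintro ⟨d, hd, hdt, rfl⟩
    have hne : d ≠ t := by rintro rfl; exact hdt le_rfl
    have hdisj : Disjoint d t := π.disjoint hd ht hne
    rw [hdisj.sdiff_eq_left]
    exact ⟨hne, hd⟩
  · rintro ⟨hne, hc⟩
    have hdisj : Disjoint c t := π.disjoint hc ht hne
    refine ⟨c, hc, ?_, hdisj.sdiff_eq_left⟩
    intro hle
    exact π.ne_bot hc (hdisj.eq_bot_of_le hle)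

/-- Extend a partition of `s \ t` by the block `t`. -/
def extendPart {s t : Finset α} (hts : t ⊆ s) (hne : t.Nonempty)
    (σ : Finpartition (s \ t)) : Finpartition s :=
  σ.extend (by simpa [Finset.nonempty_iff_ne_empty, ← Finset.bot_eq_empty] using hne)
    sdiff_disjoint (sdiff_sup_cancel hts)

lemma extendPart_parts {s t : Finset α} (hts : t ⊆ s) (hne : t.Nonempty)
    (σ : Finpartition (s \ t)) : (extendPart hts hne σ).parts = insert t σ.parts := rfl

lemma not_mem_parts_sdiff {s t : Finset α} (hne : t.Nonempty) (σ : Finpartition (s \ t)) :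
    t ∉ σ.parts := by
  intro h
  have hd : Disjoint (s \ t) t := Finset.sdiff_disjoint
  have : Disjoint t t := hd.mono_left (σ.le h)
  exact hne.ne_empty (by simpa using disjoint_self.mp this)

/-- Chinese-restaurant recursion: summing over all partitions of `s` according to the
block containing a fixed element `a`. -/
lemma crp_step (w : ℕ → ℝ) (x : ℝ) {s : Finset α} {a : α} (ha : a ∈ s) :
    ∑ π : Finpartition s, risingFactorial x π.parts.card * ∏ b ∈ π.parts, w b.card =
      ∑ t ∈ s.powerset.filter (fun t => a ∈ t),
        w t.card * x *
          ∑ σ : Finpartition (s \ t),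
            risingFactorial (x + 1) σ.parts.card * ∏ b ∈ σ.parts, w b.card := by
  rw [← Finset.sum_fiberwise_of_maps_to (g := fun π : Finpartition s => π.part a)
    (t := s.powerset.filter (fun t => a ∈ t)) (fun π _ => by
      simp only [mem_filter, mem_powerset]
      exact ⟨π.le (π.part_mem.2 ha), π.mem_part ha⟩)]
  apply Finset.sum_congr rfl
  intro t ht
  rw [mem_filter, mem_powerset] at ht
  obtain ⟨hts, hat⟩ := ht
  have hne : t.Nonempty := ⟨a, hat⟩
  rw [Finset.mul_sum]
  refine Finset.sum_nbij' (fun π => π.avoid t) (fun σ => extendPart hts hne σ) ?_ ?_ ?_ ?_ ?_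
  · intro π _; exact mem_univ _
  · intro σ _
    simp only [mem_filter, mem_univ, true_and]
    exact (extendPart hts hne σ).part_eq_of_mem
      (by rw [extendPart_parts]; exact mem_insert_self _ _) hat
  · intro π hπ
    simp only [mem_filter, mem_univ, true_and] at hπ
    have htp : t ∈ π.parts := hπ ▸ π.part_mem.2 ha
    apply Finpartition.ext
    rw [extendPart_parts, avoid_parts_of_mem π htp, insert_erase htp]
  · intro σ _
    apply Finpartition.ext
    rw [avoid_parts_of_mem (extendPart hts hne σ)
        (by rw [extendPart_parts]; exact mem_insert_self _ _),
      extendPart_parts, erase_insert (not_mem_parts_sdiff hne σ)]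
  · intro π hπ
    simp only [mem_filter, mem_univ, true_and] at hπ
    have htp : t ∈ π.parts := hπ ▸ π.part_mem.2 ha
    have hav : (π.avoid t).parts = π.parts.erase t := avoid_parts_of_mem π htp
    have hcard : π.parts.card = (π.avoid t).parts.card + 1 := by
      rw [hav, card_erase_of_mem htp]
      have : 0 < π.parts.card := card_pos.mpr ⟨t, htp⟩
      omega
    rw [hcard, rf_succ_left]
    have hprod : ∏ b ∈ π.parts, w b.card =
        w t.card * ∏ b ∈ (π.avoid t).parts, w b.card := by
      rw [hav, ← Finset.prod_erase_mul _ _ htp]; ring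
    rw [hprod]; ring


variable {α : Type*} [DecidableEq α]

lemma crp_master (w : ℕ → ℝ) (B : ℕ → ℝ → ℝ) (hB0 : ∀ x, B 0 x = 1)
    (hBrec : ∀ M (x : ℝ), B (M + 1) x =
      ∑ k ∈ Finset.range (M + 1), (M.choose k : ℝ) * (w (k + 1) * x * B (M - k) (x + 1))) :
    ∀ (N : ℕ) (s : Finset α), s.card = N → ∀ x : ℝ,
      ∑ π : Finpartition s, risingFactorial x π.parts.card * ∏ b ∈ π.parts, w b.card = B N x := by
  intro N
  induction N using Nat.strong_induction_on with
  | _ N IH =>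
    intro s hs x
    match N, hs with
    | 0, hs =>
      have hse : s = ∅ := card_eq_zero.mp hs
      subst hse
      have hparts : ∀ π : Finpartition (∅ : Finset α), π.parts = ∅ := fun π => by
        simpa using Finpartition.parts_eq_empty_iff.mpr bot_eq_empty.symm
      have h1 : ∀ π : Finpartition (∅ : Finset α),
          risingFactorial x π.parts.card * ∏ b ∈ π.parts, w b.card = 1 := fun π => by
        rw [hparts π]; simp [risingFactorial]
      rw [Finset.sum_congr rfl fun π _ => h1 π, Finset.sum_const, hB0]
      have hcard : Fintype.card (Finpartition (∅ : Finset α)) = 1 := by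
        rw [Fintype.card_eq_one_iff]
        refine ⟨⟨∅, by simp, by simp, by simp⟩, fun σ => ?_⟩
        apply Finpartition.ext
        rw [hparts σ]
      simp [hcard]
    | (M + 1), hs =>
      obtain ⟨a, ha⟩ : s.Nonempty := card_pos.mp (by omega)
      rw [crp_step w x ha]
      have hinner : ∀ t ∈ s.powerset.filter (fun t => a ∈ t),
          w t.card * x * (∑ σ : Finpartition (s \ t),
            risingFactorial (x + 1) σ.parts.card * ∏ b ∈ σ.parts, w b.card) =
          w t.card * x * B (M + 1 - t.card) (x + 1) := by
        intro t ht
        rw [mem_filter, mem_powerset] at ht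
        obtain ⟨hts, hat⟩ := ht
        have hc : (s \ t).card = M + 1 - t.card := by rw [card_sdiff_of_subset hts, hs]
        have hlt : M + 1 - t.card < M + 1 := by
          have : 0 < t.card := card_pos.mpr ⟨a, hat⟩
          omega
        rw [IH _ hlt _ hc]
      rw [Finset.sum_congr rfl hinner]
      -- reindex by `t.erase a`
      have hbij : ∑ t ∈ s.powerset.filter (fun t => a ∈ t),
          w t.card * x * B (M + 1 - t.card) (x + 1) =
          ∑ u ∈ (s.erase a).powerset, w (u.card + 1) * x * B (M - u.card) (x + 1) := by
        refine Finset.sum_nbij' (fun (t : Finset α) => t.erase a) (fun (u : Finset α) => insert a u) ?_ ?_ ?_ ?_ ?_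
        · intro t ht
          rw [mem_filter, mem_powerset] at ht
          exact mem_powerset.mpr (erase_subset_erase a ht.1)
        · intro u hu
          rw [mem_powerset] at hu
          rw [mem_filter, mem_powerset]
          exact ⟨insert_subset ha (hu.trans (erase_subset a s)), mem_insert_self a u⟩
        · intro t ht
          rw [mem_filter] at ht
          exact insert_erase ht.2
        · intro u hu
          rw [mem_powerset] at hu
          exact erase_insert (fun hau => (notMem_erase a s) (hu hau))
        · intro t ht
          rw [mem_filter] at ht
          have h1 : t.card = (t.erase a).card + 1 := by
            rw [card_erase_of_mem ht.2]
            have : 0 < t.card := card_pos.mpr ⟨a, ht.2⟩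
            omega
          have h2 : M + 1 - ((t.erase a).card + 1) = M - (t.erase a).card := by omega
          rw [h1, h2]
      rw [hbij]
      have := Finset.sum_powerset_apply_card
        (f := fun m => w (m + 1) * x * B (M - m) (x + 1)) (x := s.erase a)
      rw [this, hBrec]
      have hce : (s.erase a).card = M := by rw [card_erase_of_mem ha, hs]; omega
      rw [hce]
      apply Finset.sum_congr rfl
      intro k _
      rw [nsmul_eq_mul]


noncomputable def crpW (j : ℕ) (α : ℝ) (c : ℕ) : ℝ :=
  if j ∣ c then
    (j : ℝ) * ((-(risingFactorial (-(α / j)) (c / j))) *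
      (Nat.factorial (c - 1) : ℝ) / (Nat.factorial (c / j - 1) : ℝ))
  else 0

noncomputable def crpB (j : ℕ) (α : ℝ) (N : ℕ) (x : ℝ) : ℝ :=
  if N = 0 then 1
  else if j ∣ N then
    (j : ℝ) * ((Nat.factorial (N - 1) : ℝ) / (Nat.factorial (N / j - 1) : ℝ)) *
      risingFactorial (x * α / j) (N / j)
  else 0

lemma neg_rf_neg (β : ℝ) (k : ℕ) :
    -(risingFactorial (-β) (k + 1)) = β * risingFactorial (1 - β) k := by
  rw [rf_succ_left]
  ring_nf

lemma crpB_rec (j : ℕ) (hj : 1 ≤ j) (α : ℝ) (M : ℕ) (x : ℝ) :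
    crpB j α (M + 1) x =
      ∑ k ∈ Finset.range (M + 1),
        (M.choose k : ℝ) * (crpW j α (k + 1) * x * crpB j α (M - k) (x + 1)) := by
  by_cases hdvd : j ∣ (M + 1)
  case neg =>
    rw [crpB, if_neg (by omega), if_neg hdvd]
    symm
    apply Finset.sum_eq_zero
    intro k hk
    rw [mem_range] at hk
    by_cases h1 : j ∣ (k + 1)
    · have h2 : M - k ≠ 0 := by
        intro h0
        have hkM : k = M := by omega
        exact hdvd (hkM ▸ h1)
      have h3 : ¬ j ∣ (M - k) := by
        intro h3
        apply hdvd
        have he : (k + 1) + (M - k) = M + 1 := by omega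
        exact he ▸ Nat.dvd_add h1 h3
      rw [crpB, if_neg h2, if_neg h3]
      ring
    · rw [crpW, if_neg h1]; ring
  case pos =>
    obtain ⟨n, hMn⟩ := hdvd
    have hn : 1 ≤ n := by nlinarith
    have hjR : (j : ℝ) ≠ 0 := Nat.cast_ne_zero.mpr (by omega)
    -- restrict the sum to indices `k` with `j ∣ k + 1`
    rw [← Finset.sum_filter_of_ne (p := fun k => j ∣ (k + 1))
      (f := fun k => (M.choose k : ℝ) * (crpW j α (k + 1) * x * crpB j α (M - k) (x + 1)))
      (by
        intro k _ hne
        by_contra hdk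
        apply hne
        show (M.choose k : ℝ) * (crpW j α (k + 1) * x * crpB j α (M - k) (x + 1)) = 0
        rw [crpW, if_neg hdk]
        ring)]
    -- reindex by `m ↦ j * (m + 1) - 1`
    have hreindex : ∑ k ∈ (Finset.range (M + 1)).filter (fun k => j ∣ (k + 1)),
        (M.choose k : ℝ) * (crpW j α (k + 1) * x * crpB j α (M - k) (x + 1)) =
        ∑ m ∈ Finset.range n,
          ((M.choose (j * (m + 1) - 1) : ℝ) *
            (crpW j α (j * (m + 1)) * x * crpB j α (j * (n - 1 - m)) (x + 1))) := by
      refine Finset.sum_nbij' (fun k => (k + 1) / j - 1) (fun m => j * (m + 1) - 1)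
        ?_ ?_ ?_ ?_ ?_
      · intro k hk
        simp only [mem_filter, mem_range] at hk
        obtain ⟨hk1, q, hq⟩ := hk
        have hq1 : 1 ≤ q := by nlinarith
        have hdiv : (k + 1) / j = q := by rw [hq, Nat.mul_div_cancel_left _ (by omega : 0 < j)]
        have hqn : q ≤ n := by nlinarith
        simp only [mem_range, hdiv]
        omega
      · intro m hm
        rw [mem_range] at hm
        simp only [mem_filter, mem_range]
        have h1 : 1 ≤ j * (m + 1) := Nat.mul_pos (by omega) (by omega)
        constructor
        · have : j * (m + 1) ≤ j * n := Nat.mul_le_mul_left j (by omega)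
          omega
        · have h2 : j * (m + 1) - 1 + 1 = j * (m + 1) := by omega
          rw [h2]
          exact Dvd.intro _ rfl
      · intro k hk
        simp only [mem_filter, mem_range] at hk
        obtain ⟨hk1, q, hq⟩ := hk
        have hq1 : 1 ≤ q := by nlinarith
        have hdiv : (k + 1) / j = q := by rw [hq, Nat.mul_div_cancel_left _ (by omega : 0 < j)]
        simp only [hdiv]
        have h2 : j * (q - 1 + 1) = j * q := by congr 1; omega
        rw [h2]
        omega
      · intro m hm
        rw [mem_range] at hm
        have h1 : 1 ≤ j * (m + 1) := Nat.mul_pos (by omega) (by omega)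
        have h2 : j * (m + 1) - 1 + 1 = j * (m + 1) := by omega
        simp only [h2, Nat.mul_div_cancel_left _ (by omega : 0 < j)]
        omega
      · intro k hk
        simp only [mem_filter, mem_range] at hk
        obtain ⟨hk1, q, hq⟩ := hk
        have hq1 : 1 ≤ q := by nlinarith
        have hqn : q ≤ n := by nlinarith
        have hdiv : (k + 1) / j = q := by rw [hq, Nat.mul_div_cancel_left _ (by omega : 0 < j)]
        simp only [hdiv]
        have e1 : j * (q - 1 + 1) - 1 = k := by
          have h2 : j * (q - 1 + 1) = j * q := by congr 1; omega
          rw [h2]; omega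
        have e2 : j * (n - 1 - (q - 1)) = M - k := by
          have h3 : n - 1 - (q - 1) = n - q := by omega
          rw [h3, Nat.mul_sub]
          omega
        have e3 : j * (q - 1 + 1) = k + 1 := by
          have h2 : j * (q - 1 + 1) = j * q := by congr 1; omega
          rw [h2]; omega
        rw [e1, e2, e3]
    rw [hreindex]
    have hj0 : 0 < j := by omega
    have hterm : ∀ m ∈ Finset.range n,
        (M.choose (j * (m + 1) - 1) : ℝ) *
          (crpW j α (j * (m + 1)) * x * crpB j α (j * (n - 1 - m)) (x + 1)) =
        (j : ℝ) * ((Nat.factorial M : ℝ) / (Nat.factorial (n - 1) : ℝ)) * (x * α / j) *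
          (((n - 1).choose m : ℝ) * risingFactorial (1 - α / j) m *
            risingFactorial ((x + 1) * α / j) (n - 1 - m)) := by
      intro m hm
      rw [mem_range] at hm
      have hk1 : 1 ≤ j * (m + 1) := Nat.mul_pos hj0 (by omega)
      have hkM : j * (m + 1) - 1 ≤ M := by
        have : j * (m + 1) ≤ j * n := Nat.mul_le_mul_left j (by omega)
        omega
      have hdd : j ∣ j * (m + 1) := Dvd.intro _ rfl
      have hdivm : j * (m + 1) / j = m + 1 := Nat.mul_div_cancel_left _ hj0
      have harg : M - (j * (m + 1) - 1) = j * (n - 1 - m) := by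
        have h3 : n - 1 - m = n - (m + 1) := by omega
        rw [h3, Nat.mul_sub]
        omega
      rw [Nat.cast_choose ℝ hkM, harg]
      rw [crpW, if_pos hdd, hdivm]
      simp only [Nat.add_sub_cancel]
      rw [neg_rf_neg]
      have hfne : ∀ z : ℕ, ((Nat.factorial z : ℕ) : ℝ) ≠ 0 :=
        fun z => Nat.cast_ne_zero.mpr (Nat.factorial_ne_zero z)
      by_cases hm1 : m = n - 1
      · have h0 : n - 1 - m = 0 := by omega
        rw [h0]
        simp only [Nat.mul_zero]
        rw [crpB, if_pos rfl, rf_zero']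
        rw [← hm1, Nat.choose_self]
        simp only [Nat.factorial_zero, Nat.cast_one]
        field_simp
      · have hlt : m < n - 1 := by omega
        have hpos : 0 < n - 1 - m := by omega
        have hpos2 : 0 < j * (n - 1 - m) := Nat.mul_pos hj0 hpos
        rw [crpB, if_neg (by omega), if_pos (Dvd.intro _ rfl),
          Nat.mul_div_cancel_left _ hj0]
        rw [Nat.cast_choose ℝ (show m ≤ n - 1 by omega)]
        have hc1 : ((Nat.factorial (j * (n - 1 - m)) : ℕ) : ℝ) =
            (j : ℝ) * ((n - 1 - m : ℕ) : ℝ) * ((Nat.factorial (j * (n - 1 - m) - 1) : ℕ) : ℝ) := by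
          rw [← Nat.mul_factorial_pred hpos2.ne']
          push_cast
          ring
        have hc2 : ((Nat.factorial (n - 1 - m) : ℕ) : ℝ) =
            ((n - 1 - m : ℕ) : ℝ) * ((Nat.factorial (n - 1 - m - 1) : ℕ) : ℝ) := by
          rw [← Nat.mul_factorial_pred hpos.ne']
          push_cast
          ring
        rw [hc1, hc2]
        have hcne : ((n - 1 - m : ℕ) : ℝ) ≠ 0 := Nat.cast_ne_zero.mpr (by omega)
        field_simp
    rw [Finset.sum_congr rfl hterm, ← Finset.mul_sum]
    have hNz : M + 1 ≠ 0 := by omega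
    have hdivn : (M + 1) / j = n := by rw [hMn, Nat.mul_div_cancel_left _ hj0]
    rw [crpB, if_neg hNz, if_pos ⟨n, hMn⟩, hdivn]
    simp only [Nat.add_sub_cancel]
    have hn1 : n - 1 + 1 = n := by omega
    have hv := rf_vandermonde (n - 1) (1 - α / j) ((x + 1) * α / j)
    rw [hn1] at hv
    rw [hv]
    have huv : (1 - α / j) + (x + 1) * α / j = x * α / j + 1 := by
      field_simp
      ring
    rw [huv]
    have hrf : risingFactorial (x * α / j) n =
        (x * α / j) * risingFactorial (x * α / j + 1) (n - 1) := by
      conv_lhs => rw [← hn1]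
      rw [rf_succ_left]
    rw [hrf]
    ring

end Auxiliary

/-- Normalization of the even Chinese restaurant process distribution: the weights
`j^{#π}(θ/α)^{↑#π} ∏_{b∈π} [−(−α/j)^{↑(#b/j)}](#b−1)!/(#b/j−1)!` on `j`-even set
partitions of `{1,…,nj}` sum to `j·[(nj−1)!/(n−1)!]·(θ/j)^{↑n}`. -/
theorem even_crp_normalization (n j : ℕ) (hn : 1 ≤ n) (hj : 1 ≤ j)
    (α : ℝ) (hα : α ≠ 0) (θ : ℝ) :
    ∑ π ∈ (Finset.univ : Finset (Finpartition (Finset.univ : Finset (Fin (n * j))))).filter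
        (fun π => IsEven j π),
      (j : ℝ) ^ π.parts.card * risingFactorial (θ / α) π.parts.card *
        ∏ b ∈ π.parts,
          (-(risingFactorial (-(α / j)) (b.card / j))) *
            (Nat.factorial (b.card - 1) : ℝ) / (Nat.factorial (b.card / j - 1) : ℝ) =
    (j : ℝ) * ((Nat.factorial (n * j - 1) : ℝ) / (Nat.factorial (n - 1) : ℝ)) *
      risingFactorial (θ / j) n := by
  classical
  have hmaster := crp_master (crpW j α) (crpB j α)
    (fun x => by rw [crpB, if_pos rfl])
    (crpB_rec j hj α)
    (n * j) (Finset.univ : Finset (Fin (n * j))) (by simp) (θ / α)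
  have hfull : ∑ π ∈ (Finset.univ : Finset (Finpartition (Finset.univ : Finset (Fin (n * j))))).filter
        (fun π => IsEven j π),
      (j : ℝ) ^ π.parts.card * risingFactorial (θ / α) π.parts.card *
        ∏ b ∈ π.parts,
          (-(risingFactorial (-(α / j)) (b.card / j))) *
            (Nat.factorial (b.card - 1) : ℝ) / (Nat.factorial (b.card / j - 1) : ℝ) =
      ∑ π : Finpartition (Finset.univ : Finset (Fin (n * j))),
        risingFactorial (θ / α) π.parts.card * ∏ b ∈ π.parts, crpW j α b.card := by
    rw [← Finset.sum_filter_of_ne (p := fun π => IsEven j π)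
      (f := fun π : Finpartition (Finset.univ : Finset (Fin (n * j))) =>
        risingFactorial (θ / α) π.parts.card * ∏ b ∈ π.parts, crpW j α b.card)
      (by
        intro π _ hne
        by_contra hodd
        apply hne
        show risingFactorial (θ / α) π.parts.card * ∏ b ∈ π.parts, crpW j α b.card = 0
        rw [IsEven] at hodd
        push_neg at hodd
        obtain ⟨b, hb, hbd⟩ := hodd
        have : crpW j α b.card = 0 := by rw [crpW, if_neg hbd]
        rw [Finset.prod_eq_zero hb this]
        ring)]
    apply Finset.sum_congr rfl
    intro π hπ
    rw [Finset.mem_filter] at hπ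
    have heven : IsEven j π := hπ.2
    have hprod : ∏ b ∈ π.parts, crpW j α b.card =
        ∏ b ∈ π.parts, (j : ℝ) *
          ((-(risingFactorial (-(α / j)) (b.card / j))) *
            (Nat.factorial (b.card - 1) : ℝ) / (Nat.factorial (b.card / j - 1) : ℝ)) := by
      apply Finset.prod_congr rfl
      intro b hb
      rw [crpW, if_pos (heven b hb)]
    rw [hprod, Finset.prod_mul_distrib, Finset.prod_const]
    ring
  rw [hfull, hmaster]
  have hjn0 : n * j ≠ 0 := by positivity
  have hdvd : j ∣ n * j := Dvd.intro_left n rfl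
  have hdiv : (n * j) / j = n := Nat.mul_div_cancel n (by omega)
  rw [crpB, if_neg hjn0, if_pos hdvd, hdiv]
  have : θ / α * α / j = θ / j := by
    rw [div_mul_cancel₀ θ hα]
  rw [this]
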